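/- Let N ≥ 3 and 1 ≤ K ≤ N−2 with 2K < N. Let X' be an (N−K)-element multiset of points of ℝ^d with range (maximal pairwise distance) D, and let y_1, …, y_K ∈ ℝ^d be points such that ‖y_j − x‖ > D·√(N−K−1) for every 1 ≤ j ≤ K and every x ∈ X'. Then every (N−K)-element submultiset of X' ∪ {y_1,…,y_K} that minimizes G_{N−K} among all (N−K)-element submultisets contains none of the points y_1, …, y_K; consequently the unique minimizer is X' itself. -/

import Mathlib

open MeasureTheory Filter Metric

noncomputable section

/-- The energy `G_n` of a finite configuration of points (given as a multiset):
the sum of the squared distances from the points to their barycentre. -/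
def energy {E : Type*} [NormedAddCommGroup E] [NormedSpace ℝ E] (s : Multiset E) : ℝ :=
  (s.map fun x => ‖x - (s.card : ℝ)⁻¹ • s.sum‖ ^ 2).sum

/-- Variance identity for finitely many points in a real inner product space. -/
lemma var_ident {E : Type*} [NormedAddCommGroup E] [InnerProductSpace ℝ E]
    {n : ℕ} (hn : 0 < n) (g : Fin n → E) :
    (2 * n : ℝ) * ∑ i, ‖g i - (n : ℝ)⁻¹ • ∑ k, g k‖ ^ 2
      = ∑ i, ∑ j, ‖g i - g j‖ ^ 2 := by
  set μ : E := (n : ℝ)⁻¹ • ∑ k, g k with hμ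
  have hS : ∑ k, g k = (n : ℝ) • μ := by
    rw [hμ, smul_smul, mul_inv_cancel₀ (by positivity : (n:ℝ) ≠ 0), one_smul]
  have expand : ∀ u v : E, ‖u - v‖ ^ 2
      = ‖u‖ ^ 2 - 2 * inner ℝ u v + ‖v‖ ^ 2 := fun u v => by
    rw [← real_inner_self_eq_norm_sq, ← real_inner_self_eq_norm_sq,
      ← real_inner_self_eq_norm_sq, inner_sub_sub_self, real_inner_comm v u]; ring
  have h1 : ∑ i, ‖g i - μ‖ ^ 2
      = (∑ i, ‖g i‖ ^ 2) - (n : ℝ) * ‖μ‖ ^ 2 := by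
    simp only [expand]
    rw [Finset.sum_add_distrib, Finset.sum_sub_distrib, ← Finset.mul_sum,
      ← sum_inner, hS, real_inner_smul_left, real_inner_self_eq_norm_sq,
      Finset.sum_const, Finset.card_univ, Fintype.card_fin, nsmul_eq_mul]
    ring
  have hrow : ∀ i, ∑ j, ‖g i - g j‖ ^ 2
      = (n:ℝ) * ‖g i‖ ^ 2 - 2 * (n:ℝ) * inner ℝ (g i) μ + ∑ j, ‖g j‖ ^ 2 := by
    intro i
    simp only [expand]
    rw [Finset.sum_add_distrib, Finset.sum_sub_distrib, ← Finset.mul_sum,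
      ← inner_sum, hS, real_inner_smul_right,
      Finset.sum_const, Finset.card_univ, Fintype.card_fin, nsmul_eq_mul]
    ring
  have h2 : ∑ i, ∑ j, ‖g i - g j‖ ^ 2
      = 2 * (n:ℝ) * (∑ i, ‖g i‖ ^ 2) - 2 * (n:ℝ)^2 * ‖μ‖ ^ 2 := by
    rw [Finset.sum_congr rfl (fun i _ => hrow i)]
    rw [Finset.sum_add_distrib, Finset.sum_sub_distrib, ← Finset.mul_sum,
      ← Finset.mul_sum, ← sum_inner, hS, real_inner_smul_left,
      real_inner_self_eq_norm_sq, Finset.sum_const, Finset.card_univ,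
      Fintype.card_fin, nsmul_eq_mul]
    ring
  rw [h1, h2]; ring

/-- Upper bound on the energy of a configuration of `n` points with range at most `D`:
`energy ≤ (n-1) D² / 2`. -/
lemma energy_le_of_dist_le {E : Type*} [NormedAddCommGroup E] [InnerProductSpace ℝ E]
    {t : Multiset E} (ht : t ≠ 0) {D : ℝ}
    (hb : ∀ x ∈ t, ∀ z ∈ t, dist x z ≤ D) :
    energy t ≤ ((t.card : ℝ) - 1) * D ^ 2 / 2 := by
  set l := t.toList with hldef
  have hl : (l : Multiset E) = t := Multiset.coe_toList t
  set n := l.length with hndef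
  have hn : 0 < n := by
    rw [hndef, hldef, Multiset.length_toList]
    exact Multiset.card_pos.mpr ht
  set g : Fin n → E := l.get with hgdef
  have hcard : t.card = n := by rw [← hl]; simp; rfl
  have hsum : t.sum = ∑ i, g i := by
    rw [← hl, Multiset.sum_coe, ← List.sum_ofFn, List.ofFn_get]
  have hmem : ∀ i : Fin n, g i ∈ t := by
    intro i; rw [← hl]; exact Multiset.mem_coe.mpr (List.get_mem _ _)
  have henergy : energy t = ∑ i, ‖g i - (n : ℝ)⁻¹ • ∑ k, g k‖ ^ 2 := by
    rw [energy, hcard, hsum, ← hl, Multiset.map_coe, Multiset.sum_coe]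
    conv_lhs => rw [← List.ofFn_get l, List.map_ofFn, List.sum_ofFn]
    rfl
  have hvar := var_ident hn g
  have hbound : ∑ i, ∑ j, ‖g i - g j‖ ^ 2 ≤ (n : ℝ) * (((n : ℝ) - 1) * D ^ 2) := by
    calc ∑ i, ∑ j, ‖g i - g j‖ ^ 2 ≤ ∑ _i : Fin n, ((n : ℝ) - 1) * D ^ 2 := by
          apply Finset.sum_le_sum
          intro i _
          rw [← Finset.add_sum_erase _ _ (Finset.mem_univ i)]
          have h0 : ‖g i - g i‖ ^ 2 = 0 := by simp
          rw [h0, zero_add]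
          have hle : ∑ j ∈ Finset.univ.erase i, ‖g i - g j‖ ^ 2
              ≤ (Finset.univ.erase i).card • (D ^ 2) := by
            apply Finset.sum_le_card_nsmul
            intro j _
            rw [← dist_eq_norm]
            exact pow_le_pow_left₀ dist_nonneg (hb _ (hmem i) _ (hmem j)) 2
          refine hle.trans ?_
          rw [Finset.card_erase_of_mem (Finset.mem_univ i), Finset.card_univ,
            Fintype.card_fin, nsmul_eq_mul, Nat.cast_sub hn]
          simp
      _ = (n : ℝ) * (((n : ℝ) - 1) * D ^ 2) := by
          rw [Finset.sum_const, Finset.card_univ, Fintype.card_fin, nsmul_eq_mul]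
  rw [henergy, hcard]
  have hn' : (0 : ℝ) < n := by exact_mod_cast hn
  nlinarith [hvar, hbound]

/-- Lower bound: the energy of a configuration containing two points `a, b`
(at distinct positions) is at least `dist a b ² / 2`. -/
lemma energy_ge_half_sq_dist {E : Type*} [NormedAddCommGroup E] [NormedSpace ℝ E]
    [DecidableEq E] {t : Multiset E} {a b : E} (ha : a ∈ t) (hb : b ∈ t.erase a) :
    dist a b ^ 2 / 2 ≤ energy t := by
  obtain ⟨r, hr⟩ : ∃ r, t = a ::ₘ b ::ₘ r := by
    refine ⟨(t.erase a).erase b, ?_⟩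
    rw [Multiset.cons_erase hb, Multiset.cons_erase ha]
  set c := (t.card : ℝ)⁻¹ • t.sum with hc
  have : energy t = ((a ::ₘ b ::ₘ r).map fun x => ‖x - c‖ ^ 2).sum := by
    rw [energy, ← hc, ← hr]
  rw [this, Multiset.map_cons, Multiset.map_cons, Multiset.sum_cons, Multiset.sum_cons]
  have hrest : (0 : ℝ) ≤ (r.map fun x => ‖x - c‖ ^ 2).sum := by
    apply Multiset.sum_nonneg
    intro x hx
    obtain ⟨z, _, rfl⟩ := Multiset.mem_map.mp hx
    positivity
  have tri : dist a b ≤ ‖a - c‖ + ‖b - c‖ := by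
    calc dist a b ≤ dist a c + dist c b := dist_triangle a c b
      _ = ‖a - c‖ + ‖b - c‖ := by rw [dist_eq_norm, dist_eq_norm, norm_sub_rev c b]
  nlinarith [tri, sq_nonneg (‖a - c‖ - ‖b - c‖), dist_nonneg (x := a) (y := b),
    norm_nonneg (a - c), norm_nonneg (b - c)]

/-- If `2K < N` and all the distances between the `K` new points `y j` and the points of the
old core `X'` (an `(N-K)`-element multiset with range `D`) exceed `D·√(N-K-1)`, then every
energy-minimizing `(N-K)`-element submultiset of `X' + {y 1, …, y K}` contains none of the
points `y j`; consequently the unique minimizer is `X'` itself. -/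
theorem stmt3 {d N K : ℕ} (hN : 3 ≤ N) (hK1 : 1 ≤ K) (hK2 : K ≤ N - 2) (h2K : 2 * K < N)
    (X' : Multiset (EuclideanSpace ℝ (Fin d))) (hcard : X'.card = N - K) (D : ℝ)
    (hD : IsGreatest {r : ℝ | ∃ x ∈ X', ∃ y ∈ X', dist x y = r} D)
    (y : Fin K → EuclideanSpace ℝ (Fin d))
    (hfar : ∀ j : Fin K, ∀ x ∈ X', D * Real.sqrt ((N : ℝ) - K - 1) < dist (y j) x) :
    ∀ s : Multiset (EuclideanSpace ℝ (Fin d)),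
      s ≤ X' + ↑(List.ofFn y) → s.card = N - K →
      (∀ u : Multiset (EuclideanSpace ℝ (Fin d)),
        u ≤ X' + ↑(List.ofFn y) → u.card = N - K → energy s ≤ energy u) →
      (∀ j : Fin K, y j ∉ s) ∧ s = X' := by
  classical
  intro s hs hscard hmin
  set M := N - K with hM
  have hKN : K ≤ N := by omega
  have hM2 : 2 ≤ M := by omega
  have hKM : K < M := by omega
  -- basic facts about D
  have hD0 : 0 ≤ D := by
    obtain ⟨x0, hx0, y0, hy0, hxy0⟩ := hD.1
    rw [← hxy0]; exact dist_nonneg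
  have hDub : ∀ x ∈ X', ∀ z ∈ X', dist x z ≤ D := fun x hx z hz =>
    hD.2 ⟨x, hx, z, hz, rfl⟩
  have hX'ne : X' ≠ 0 := by
    intro h; rw [h] at hcard; simp at hcard; omega
  -- upper bound for the energy of X'
  have hub : energy X' ≤ ((M : ℝ) - 1) * D ^ 2 / 2 := by
    have := energy_le_of_dist_le hX'ne hDub
    rwa [hcard] at this
  -- minimality against X'
  have hEs : energy s ≤ energy X' := hmin X' (Multiset.le_add_right _ _) hcard
  -- cast lemma
  have hacast : (N : ℝ) - K - 1 = (M : ℝ) - 1 := by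
    rw [hM, Nat.cast_sub hKN]
  have hM1 : (1 : ℝ) ≤ (M : ℝ) := by exact_mod_cast (by omega : 1 ≤ M)
  have hfar' : ∀ j : Fin K, ∀ x ∈ X', ((M : ℝ) - 1) * D ^ 2 < dist (y j) x ^ 2 := by
    intro j x hx
    have h1 := hfar j x hx
    have h2 : 0 ≤ D * Real.sqrt ((N : ℝ) - K - 1) :=
      mul_nonneg hD0 (Real.sqrt_nonneg _)
    have h3 : (D * Real.sqrt ((N : ℝ) - K - 1)) ^ 2 = ((M : ℝ) - 1) * D ^ 2 := by
      rw [mul_pow, Real.sq_sqrt (by rw [hacast]; linarith), hacast]; ring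
    nlinarith [h1, h2]
  -- No y j can appear in s
  have hnoy : ∀ j : Fin K, y j ∉ s := by
    intro j hj
    -- s contains some point of X'
    have hex : ∃ x ∈ s, x ∈ X' := by
      by_contra h
      push_neg at h
      have hsL : s ≤ (↑(List.ofFn y) : Multiset (EuclideanSpace ℝ (Fin d))) := by
        rw [Multiset.le_iff_count]
        intro v
        by_cases hv : v ∈ s
        · have hcnt := Multiset.count_le_of_le v hs
          rw [Multiset.count_add] at hcnt
          have hX0 : X'.count v = 0 := Multiset.count_eq_zero.mpr (h v hv)
          omega
        · rw [Multiset.count_eq_zero.mpr hv]; exact Nat.zero_le _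
      have hcle := Multiset.card_le_card hsL
      rw [hscard] at hcle
      have : (↑(List.ofFn y) : Multiset (EuclideanSpace ℝ (Fin d))).card = K := by
        rw [Multiset.coe_card, List.length_ofFn]
      omega
    obtain ⟨x, hxs, hxX'⟩ := hex
    have hne : x ≠ y j := by
      intro h
      have := hfar j x hxX'
      rw [h, dist_self] at this
      nlinarith [mul_nonneg hD0 (Real.sqrt_nonneg ((N : ℝ) - K - 1))]
    have hxerase : x ∈ s.erase (y j) := (Multiset.mem_erase_of_ne hne).mpr hxs
    have hlow := energy_ge_half_sq_dist hj hxerase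
    have hq := hfar' j x hxX'
    linarith [hub, hEs, hlow, hq]
  refine ⟨hnoy, ?_⟩
  -- s ≤ X'
  have hsub : s ≤ X' := by
    rw [Multiset.le_iff_count]
    intro v
    by_cases hv : v ∈ s
    · have hcnt := Multiset.count_le_of_le v hs
      rw [Multiset.count_add] at hcnt
      have hLv : (↑(List.ofFn y) : Multiset (EuclideanSpace ℝ (Fin d))).count v = 0 := by
        rw [Multiset.count_eq_zero]
        intro hvL
        rw [Multiset.mem_coe, List.mem_ofFn] at hvL
        obtain ⟨j, rfl⟩ := hvL
        exact hnoy j hv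
      omega
    · rw [Multiset.count_eq_zero.mpr hv]; exact Nat.zero_le _
  exact Multiset.eq_of_le_of_card_le hsub (by rw [hcard, hscard])
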